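/- arXiv:1906.05159 — 3 statements merged into one kernel-verified Lean document; each statement's English description precedes it below -/
import Mathlib

section
/- For a positive definite matrix Θ that is an M-matrix (i.e., Θ_{ij} ≤ 0 for all i ≠ j), every off-diagonal entry of any principal-submatrix inverse of Σ = Θ^{-1} satisfies: for any subset M ⊆ [p] containing i and j, ((Σ_{M,M})^{-1})_{i,j} ≤ Θ_{ij} ≤ 0. -/
open Matrix

lemma sum_extend_mul {m n : Type*} [Fintype m] [Fintype n] [DecidableEq n]
    {f : m → n} (hf : Function.Injective f) (x : m → ℝ) (g : n → ℝ) :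
    ∑ i, Function.extend f x 0 i * g i = ∑ k, x k * g (f k) := by
  calc ∑ i, Function.extend f x 0 i * g i
      = ∑ i ∈ Finset.univ.image f, Function.extend f x 0 i * g i := by
        refine (Finset.sum_subset (Finset.subset_univ _) ?_).symm
        intro i _ hi
        have : ¬ ∃ a, f a = i := by simpa [Finset.mem_image] using hi
        rw [Function.extend_apply' _ _ _ this]
        simp
    _ = ∑ k, Function.extend f x 0 (f k) * g (f k) :=
        Finset.sum_image (fun a _ b _ h => hf h)
    _ = ∑ k, x k * g (f k) := by
        refine Finset.sum_congr rfl fun k _ => ?_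
        rw [hf.extend_apply]

lemma posDef_submatrix_inj {m n : Type*} [Fintype m] [Fintype n] [DecidableEq n] [DecidableEq m]
    {A : Matrix n n ℝ} (hA : A.PosDef) {f : m → n} (hf : Function.Injective f) :
    (A.submatrix f f).PosDef := by
  refine Matrix.PosDef.of_dotProduct_mulVec_pos (hA.1.submatrix f) ?_
  intro x hx
  have hyne : Function.extend f x 0 ≠ 0 := by
    intro h
    apply hx
    ext k
    have := congrFun h (f k)
    simpa [hf.extend_apply] using this
  have key : star x ⬝ᵥ (A.submatrix f f) *ᵥ x
      = star (Function.extend f x 0) ⬝ᵥ A *ᵥ (Function.extend f x 0) := by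
    simp only [star_trivial, dotProduct, mulVec, submatrix_apply]
    rw [sum_extend_mul hf x (fun i => ∑ j, A i j * Function.extend f x 0 j)]
    refine Finset.sum_congr rfl fun k _ => ?_
    congr 1
    rw [show (∑ j, A (f k) j * Function.extend f x 0 j)
        = ∑ j, Function.extend f x 0 j * A (f k) j from
        Finset.sum_congr rfl fun j _ => mul_comm _ _,
      sum_extend_mul hf x (fun i => A (f k) i)]
    exact Finset.sum_congr rfl fun l _ => mul_comm _ _
  rw [key]
  exact hA.dotProduct_mulVec_pos hyne

/-- inverse of a PD Z-matrix is entrywise nonnegative -/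
lemma inv_entry_nonneg {n : Type*} [Fintype n] [DecidableEq n]
    {A : Matrix n n ℝ} (hA : A.PosDef) (hZ : ∀ i j, i ≠ j → A i j ≤ 0)
    (i j : n) : 0 ≤ A⁻¹ i j := by
  have hdet : IsUnit A.det := isUnit_iff_ne_zero.mpr hA.det_pos.ne'
  have hAinv : A * A⁻¹ = 1 := Matrix.mul_nonsing_inv A hdet
  set x : n → ℝ := fun k => A⁻¹ k j with hxdef
  have hx : ∀ k, (A *ᵥ x) k = (1 : Matrix n n ℝ) k j := by
    intro k
    have := congrFun (congrFun hAinv k) j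
    simpa [Matrix.mul_apply, mulVec, dotProduct] using this
  set y : n → ℝ := fun k => max (-(x k)) 0 with hydef
  set z : n → ℝ := fun k => max (x k) 0 with hzdef
  have hxyz : ∀ k, x k = z k - y k := fun k => (max_zero_sub_max_neg_zero_eq_self (x k)).symm
  have hy0 : ∀ k, 0 ≤ y k := fun k => le_max_right _ _
  have hz0 : ∀ k, 0 ≤ z k := fun k => le_max_right _ _
  have hyz : ∀ k, y k * z k = 0 := by
    intro k
    rcases le_or_gt (x k) 0 with h | h
    · have : z k = 0 := max_eq_right h
      simp [this]
    · have : y k = 0 := max_eq_right (by simp [hydef]; linarith)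
      simp [this]
  have hyzero : y = 0 := by
    by_contra hyne
    have hpos := hA.dotProduct_mulVec_pos hyne
    simp only [star_trivial] at hpos
    have e1 : y ⬝ᵥ A *ᵥ x = y j := by
      simp only [dotProduct]
      rw [Finset.sum_congr rfl fun k _ => by rw [hx k]]
      simp [Matrix.one_apply]
    have e2 : y ⬝ᵥ A *ᵥ x = y ⬝ᵥ A *ᵥ z - y ⬝ᵥ A *ᵥ y := by
      have hxz : x = z - y := funext fun k => by simpa using hxyz k
      rw [hxz, Matrix.mulVec_sub, dotProduct_sub]
    have e3 : y ⬝ᵥ A *ᵥ z ≤ 0 := by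
      simp only [dotProduct, mulVec, Finset.mul_sum]
      apply Finset.sum_nonpos
      intro k _
      apply Finset.sum_nonpos
      intro l _
      rcases eq_or_ne k l with rfl | hkl
      · have h : y k * (A k k * z k) = (y k * z k) * A k k := by ring
        rw [h, hyz k]; simp
      · have h1 : A k l ≤ 0 := hZ k l hkl
        have h : y k * (A k l * z l) = A k l * (y k * z l) := by ring
        rw [h]
        exact mul_nonpos_of_nonpos_of_nonneg h1 (mul_nonneg (hy0 k) (hz0 l))
    have hyj : 0 ≤ y j := hy0 j
    nlinarith [hpos, e1, e2, e3]
  have hyi := congrFun hyzero i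
  simp only [hydef, Pi.zero_apply] at hyi
  have hineg : -(x i) ≤ 0 := by
    by_contra h
    push_neg at h
    rw [max_eq_left h.le] at hyi
    linarith
  simpa [hxdef] using (by linarith : (0:ℝ) ≤ x i)

/-- For a symmetric positive definite M-matrix `Θ` (`Θ i j ≤ 0` for `i ≠ j`) with
`Σ = Θ⁻¹`, and any index subset `M` containing `i ≠ j`, the off-diagonal entry of the
inverse of the principal submatrix `Σ_{M,M}` satisfies
`((Σ_{M,M})⁻¹)_{i,j} ≤ Θ_{i,j} ≤ 0`. -/
theorem stmt0 {p : ℕ} (Θ : Matrix (Fin p) (Fin p) ℝ)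
    (hpd : Θ.PosDef) (hsym : Θ.IsSymm)
    (hM : ∀ i j : Fin p, i ≠ j → Θ i j ≤ 0)
    (Sg : Matrix (Fin p) (Fin p) ℝ) (hSg : Sg = Θ⁻¹)
    (M : Finset (Fin p)) (i j : Fin p) (hij : i ≠ j)
    (hi : i ∈ M) (hj : j ∈ M) :
    ((Matrix.of fun a b : ↥M => Sg a.1 b.1)⁻¹) ⟨i, hi⟩ ⟨j, hj⟩ ≤ Θ i j ∧ Θ i j ≤ 0 := by
  classical
  refine ⟨?_, hM i j hij⟩
  set e : {x : Fin p // x ∈ M} ⊕ {x : Fin p // x ∉ M} ≃ Fin p :=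
    Equiv.sumCompl (· ∈ M) with he
  set Θ' := Θ.submatrix e e with hΘ'
  set U := Sg.submatrix e e with hU
  have hdet : IsUnit Θ.det := isUnit_iff_ne_zero.mpr hpd.det_pos.ne'
  have hΘSg : Θ * Sg = 1 := by rw [hSg]; exact Matrix.mul_nonsing_inv Θ hdet
  have hmul : Θ' * U = 1 := by
    rw [hΘ', hU, Matrix.submatrix_mul_equiv, hΘSg, Matrix.submatrix_one_equiv]
  set A := Θ'.toBlocks₁₁ with hA
  set B := Θ'.toBlocks₁₂ with hB
  set C := Θ'.toBlocks₂₁ with hC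
  set D := Θ'.toBlocks₂₂ with hD
  set P := U.toBlocks₁₁ with hP
  set Rb := U.toBlocks₂₁ with hRb
  -- block equations
  have hblocks : Matrix.fromBlocks (A * P + B * Rb) (A * U.toBlocks₁₂ + B * U.toBlocks₂₂)
      (C * P + D * Rb) (C * U.toBlocks₁₂ + D * U.toBlocks₂₂)
      = Matrix.fromBlocks 1 0 0 1 := by
    rw [← Matrix.fromBlocks_multiply, Matrix.fromBlocks_toBlocks, Matrix.fromBlocks_toBlocks,
      Matrix.fromBlocks_one]
    exact hmul
  rw [Matrix.fromBlocks_inj] at hblocks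
  have h1 : A * P + B * Rb = 1 := hblocks.1
  have h3 : C * P + D * Rb = 0 := hblocks.2.2.1
  -- D is PosDef
  have hDpd : D.PosDef := by
    have : D = Θ.submatrix (fun k : {x : Fin p // x ∉ M} => e (Sum.inr k))
        (fun k => e (Sum.inr k)) := rfl
    rw [this]
    exact posDef_submatrix_inj hpd (e.injective.comp Sum.inr_injective)
  have hDdet : IsUnit D.det := isUnit_iff_ne_zero.mpr hDpd.det_pos.ne'
  have hDinv : D⁻¹ * D = 1 := Matrix.nonsing_inv_mul D hDdet
  -- Rb = -(D⁻¹ * (C * P))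
  have hRbeq : Rb = -(D⁻¹ * (C * P)) := by
    have h3' : D * Rb = -(C * P) := eq_neg_of_add_eq_zero_right h3
    have hid : D⁻¹ * (D * Rb) = Rb := by
      rw [← Matrix.mul_assoc, hDinv, Matrix.one_mul]
    rw [h3', Matrix.mul_neg] at hid
    exact hid.symm
  have hKP : (A - B * D⁻¹ * C) * P = 1 := by
    rw [Matrix.sub_mul, Matrix.mul_assoc (B * D⁻¹) C P, Matrix.mul_assoc B D⁻¹ (C * P)]
    rw [hRbeq, Matrix.mul_neg] at h1
    rw [← h1]
    abel
  -- the target matrix is P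
  have hPdef : (Matrix.of fun a b : ↥M => Sg a.1 b.1) = P := by
    ext a b
    simp only [Matrix.of_apply, hP, hU, Matrix.toBlocks₁₁, Matrix.submatrix_apply, he]
    simp [Equiv.sumCompl_apply_inl]
  have hPinv : (Matrix.of fun a b : ↥M => Sg a.1 b.1)⁻¹ = A - B * D⁻¹ * C := by
    rw [hPdef]
    exact Matrix.inv_eq_left_inv hKP
  rw [hPinv]
  -- entrywise estimate
  have hAij : A ⟨i, hi⟩ ⟨j, hj⟩ = Θ i j := by
    simp only [hA, hΘ', Matrix.toBlocks₁₁, Matrix.of_apply, Matrix.submatrix_apply, he]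
    simp [Equiv.sumCompl_apply_inl]
  have hDZ : ∀ k l : {x : Fin p // x ∉ M}, k ≠ l → D k l ≤ 0 := by
    intro k l hkl
    have : D k l = Θ k.1 l.1 := by
      simp only [hD, hΘ', Matrix.toBlocks₂₂, Matrix.of_apply, Matrix.submatrix_apply, he]
      simp [Equiv.sumCompl_apply_inr]
    rw [this]
    exact hM _ _ (fun h => hkl (Subtype.ext h))
  have hDinvnn : ∀ k l, 0 ≤ D⁻¹ k l := inv_entry_nonneg hDpd hDZ
  have hterm : 0 ≤ (B * D⁻¹ * C) ⟨i, hi⟩ ⟨j, hj⟩ := by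
    rw [Matrix.mul_apply]
    apply Finset.sum_nonneg
    intro l _
    rw [Matrix.mul_apply, Finset.sum_mul]
    apply Finset.sum_nonneg'
    intro k
    have hB' : B ⟨i, hi⟩ k = Θ i k.1 := by
      simp only [hB, hΘ', Matrix.toBlocks₁₂, Matrix.of_apply, Matrix.submatrix_apply, he]
      simp [Equiv.sumCompl_apply_inl, Equiv.sumCompl_apply_inr]
    have hC' : C l ⟨j, hj⟩ = Θ l.1 j := by
      simp only [hC, hΘ', Matrix.toBlocks₂₁, Matrix.of_apply, Matrix.submatrix_apply, he]
      simp [Equiv.sumCompl_apply_inl, Equiv.sumCompl_apply_inr]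
    rw [show B ⟨i,hi⟩ k * D⁻¹ k l * C l ⟨j,hj⟩
        = (C l ⟨j,hj⟩ * B ⟨i,hi⟩ k) * D⁻¹ k l by ring]
    apply mul_nonneg
    · rw [hC', hB']
      have h1 : Θ l.1 j ≤ 0 := hM _ _ (fun h => l.2 (h ▸ hj))
      have h2 : Θ i k.1 ≤ 0 := hM _ _ (fun h => k.2 (h ▸ hi))
      nlinarith [h1, h2]
    · exact hDinvnn k l
  have : (A - B * D⁻¹ * C) ⟨i, hi⟩ ⟨j, hj⟩ = Θ i j - (B * D⁻¹ * C) ⟨i, hi⟩ ⟨j, hj⟩ := by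
    rw [Matrix.sub_apply, hAij]
  rw [this]
  linarith
end

section
/- Let B be a set of N elements and B_1,...,B_K independent uniformly random size-M subsets of B. Then for all ε > 0, P(max_{i<j} |B_i ∩ B_j| < M²/N + εN) ≥ 1 − exp(−2ε²N + 2 log K). -/
open Finset

section AuxStmt5

open Real in

lemma auxGpos (p : ℝ) (hp0 : 0 ≤ p) (hp1 : p ≤ 1) (x : ℝ) : 0 < 1 - p + p * Real.exp x := by
  rcases eq_or_lt_of_le hp1 with h | h
  · subst h; simpa using Real.exp_pos x
  · have := Real.exp_pos x
    nlinarith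

lemma auxHoeffding {p : ℝ} (hp0 : 0 ≤ p) (hp1 : p ≤ 1) {l : ℝ} (hl : 0 ≤ l) :
    Real.log (1 - p + p * Real.exp l) ≤ p * l + l ^ 2 / 8 := by
  set g : ℝ → ℝ := fun x => 1 - p + p * Real.exp x with hg
  have hgpos : ∀ x, 0 < g x := auxGpos p hp0 hp1
  set ψ : ℝ → ℝ := fun x => p + x / 4 - p * Real.exp x / g x with hψ
  have hψd : ∀ x : ℝ, HasDerivAt ψ (1 / 4 - p * Real.exp x * (1 - p) / (g x) ^ 2) x := by
    intro x
    have hgd : HasDerivAt g (p * Real.exp x) x := by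
      exact ((Real.hasDerivAt_exp x).const_mul p).const_add (1 - p)
    have hnum : HasDerivAt (fun x => p * Real.exp x) (p * Real.exp x) x :=
      (Real.hasDerivAt_exp x).const_mul p
    have hdiv := hnum.div hgd (ne_of_gt (hgpos x))
    have hlin : HasDerivAt (fun x : ℝ => p + x / 4) (1 / 4) x := by
      simpa using ((hasDerivAt_id x).div_const 4).const_add p
    have := hlin.sub hdiv
    refine this.congr_deriv ?_
    have hgx := hgpos x
    simp only [hg]
    ring
  have hψmono : Monotone ψ := by
    apply monotone_of_deriv_nonneg
    · exact fun x => (hψd x).differentiableAt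
    · intro x
      rw [(hψd x).deriv]
      have hgx := hgpos x
      have hexp := (Real.exp_pos x).le
      have key : p * Real.exp x * (1 - p) ≤ (g x) ^ 2 / 4 := by
        nlinarith [sq_nonneg (p * Real.exp x - (1 - p))]
      rw [sub_nonneg, div_le_iff₀ (by positivity)]
      nlinarith
  have hψ0 : ψ 0 = 0 := by simp [hψ, hg]
  set φ : ℝ → ℝ := fun x => p * x + x ^ 2 / 8 - Real.log (g x) with hφ
  have hφd : ∀ x : ℝ, HasDerivAt φ (ψ x) x := by
    intro x
    have hgd : HasDerivAt g (p * Real.exp x) x := by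
      exact ((Real.hasDerivAt_exp x).const_mul p).const_add (1 - p)
    have hlog : HasDerivAt (fun x => Real.log (g x)) (p * Real.exp x / g x) x :=
      hgd.log (ne_of_gt (hgpos x))
    have hlin : HasDerivAt (fun x : ℝ => p * x + x ^ 2 / 8) (p + x / 4) x := by
      have h1 : HasDerivAt (fun x : ℝ => p * x) p x := by
        simpa using (hasDerivAt_id x).const_mul p
      have h2 : HasDerivAt (fun x : ℝ => x ^ 2 / 8) (x / 4) x := by
        have := (hasDerivAt_pow 2 x).div_const 8
        exact this.congr_deriv (by norm_num; ring)
      exact h1.add h2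
    have := hlin.sub hlog
    exact this
  have hφmono : MonotoneOn φ (Set.Ici 0) := by
    apply monotoneOn_of_deriv_nonneg (convex_Ici 0)
    · exact Continuous.continuousOn (by
        fun_prop (disch := intro x; exact ne_of_gt (hgpos x)))
    · intro x _
      exact (hφd x).differentiableAt.differentiableWithinAt
    · intro x hx
      rw [(hφd x).deriv]
      rw [interior_Ici] at hx
      have := hψmono (le_of_lt hx)
      rwa [hψ0] at this
  have hφ0 : φ 0 = 0 := by simp [hφ, hg]
  have := hφmono (Set.self_mem_Ici) (Set.mem_Ici.mpr hl) hl
  rw [hφ0] at this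
  simpa [hφ, hg, sub_nonneg] using this


variable {α : Type*} [Fintype α] [DecidableEq α]

lemma card_supersets (S : Finset α) (M : ℕ) (hS : S.card ≤ M) :
    ((Finset.powersetCard M (univ : Finset α)).filter (fun B => S ⊆ B)).card
      = (Fintype.card α - S.card).choose (M - S.card) := by
  have : (Fintype.card α - S.card).choose (M - S.card)
      = (Finset.powersetCard (M - S.card) ((univ : Finset α) \ S)).card := by
    rw [Finset.card_powersetCard, Finset.card_sdiff_of_subset (Finset.subset_univ S), Finset.card_univ]
  rw [this]
  apply Finset.card_bij' (fun B _ => B \ S) (fun T _ => T ∪ S)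
  · intro B hB
    simp only [Finset.mem_filter, Finset.mem_powersetCard] at hB
    obtain ⟨⟨_, hcard⟩, hsub⟩ := hB
    simp only [Finset.mem_powersetCard]
    exact ⟨Finset.sdiff_subset_sdiff (Finset.subset_univ B) le_rfl,
      by rw [Finset.card_sdiff_of_subset hsub, hcard]⟩
  · intro T hT
    simp only [Finset.mem_powersetCard] at hT
    obtain ⟨hsub, hcard⟩ := hT
    obtain ⟨-, hdisj⟩ := Finset.subset_sdiff.mp hsub
    simp only [Finset.mem_filter, Finset.mem_powersetCard]
    refine ⟨⟨Finset.subset_univ _, ?_⟩, Finset.subset_union_right⟩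
    rw [Finset.card_union_of_disjoint hdisj, hcard]
    omega
  · intro B hB
    simp only [Finset.mem_filter] at hB
    exact Finset.sdiff_union_of_subset hB.2
  · intro T hT
    simp only [Finset.mem_powersetCard] at hT
    obtain ⟨-, hdisj⟩ := Finset.subset_sdiff.mp hT.1
    exact Finset.union_sdiff_cancel_right hdisj

lemma choose_ratio {N M : ℕ} (hMN : M ≤ N) (hN : 1 ≤ N) :
    ∀ j, j ≤ M → (((N - j).choose (M - j) : ℝ)) ≤ (N.choose M : ℝ) * ((M : ℝ) / N) ^ j := by
  intro j
  induction j with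
  | zero => simp
  | succ j ih =>
    intro hj
    have hjM : j < M := by omega
    have ihj := ih (le_of_lt hjM)
    obtain ⟨m', hm'⟩ : ∃ m', M - j = m' + 1 := ⟨M - j - 1, by omega⟩
    obtain ⟨n', hn'⟩ : ∃ n', N - j = n' + 1 := ⟨N - j - 1, by omega⟩
    have hMj : M - (j+1) = m' := by omega
    have hNj : N - (j+1) = n' := by omega
    have key : (n' + 1) * n'.choose m' = (n' + 1).choose (m' + 1) * (m' + 1) :=
      Nat.add_one_mul_choose_eq n' m'
    have hkey : ((n'.choose m' : ℝ)) = ((n'+1).choose (m'+1) : ℝ) * (m'+1) / (n'+1) := by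
      have h : ((n' + 1 : ℝ)) * (n'.choose m' : ℝ) = ((n'+1).choose (m'+1) : ℝ) * ((m'+1 : ℝ)) := by
        exact_mod_cast key
      field_simp
      linarith
    rw [hMj, hNj, hkey, ← hm', ← hn']
    have hratio : ((m' + 1 : ℝ)) / (n' + 1) ≤ (M : ℝ) / N := by
      rw [div_le_div_iff₀ (by positivity) (by exact_mod_cast hN)]
      have h1 : (m' + 1 : ℝ) = (M : ℝ) - j := by
        have h := hm'
        have hc : ((M - j : ℕ) : ℝ) = (M : ℝ) - j := by
          rw [Nat.cast_sub (le_of_lt hjM)]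
        rw [h] at hc
        push_cast at hc
        linarith
      have h2 : (n' + 1 : ℝ) = (N : ℝ) - j := by
        have h := hn'
        have hc : ((N - j : ℕ) : ℝ) = (N : ℝ) - j := by
          rw [Nat.cast_sub (by omega : j ≤ N)]
        rw [h] at hc
        push_cast at hc
        linarith
      rw [h1, h2]
      have hjM' : (j : ℝ) * M ≤ (j : ℝ) * N := by
        have : (M : ℝ) ≤ N := by exact_mod_cast hMN
        exact mul_le_mul_of_nonneg_left this (by positivity)
      nlinarith
    rw [hm', hn'] at ihj ⊢
    have hpos : (0:ℝ) ≤ ((n'+1).choose (m'+1) : ℝ) := by positivity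
    calc ((n'+1).choose (m'+1) : ℝ) * (m'+1) / (n'+1)
        = ((n'+1).choose (m'+1) : ℝ) * ((m'+1 : ℝ) / (n'+1)) := by ring
      _ ≤ ((N.choose M : ℝ) * ((M:ℝ)/N) ^ j) * ((M:ℝ)/N) := by
          apply mul_le_mul ihj hratio (by positivity)
          positivity
      _ = (N.choose M : ℝ) * ((M:ℝ)/N) ^ (j+1) := by ring

lemma mgf_bound {N M : ℕ} (hMN : M ≤ N) (hN : 1 ≤ N) (u : ℝ) (hu : 0 ≤ u)
    (A : Finset (Fin N)) (hA : A.card = M) :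
    ∑ B ∈ Finset.powersetCard M (univ : Finset (Fin N)), (1 + u) ^ (A ∩ B).card
      ≤ (N.choose M : ℝ) * (1 + u * ((M : ℝ) / N)) ^ M := by
  set P := Finset.powersetCard M (univ : Finset (Fin N)) with hP
  have step1 : ∀ B : Finset (Fin N),
      (1 + u : ℝ) ^ (A ∩ B).card = ∑ S ∈ A.powerset, if S ⊆ B then u ^ S.card else 0 := by
    intro B
    have hprod := Finset.prod_add (fun _ : Fin N => u) (fun _ : Fin N => (1:ℝ)) (A ∩ B)
    simp only [Finset.prod_const, one_pow, mul_one] at hprod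
    rw [add_comm (1:ℝ) u, hprod]
    rw [← Finset.sum_filter]
    refine Finset.sum_congr ?_ fun _ _ => rfl
    ext S
    simp only [Finset.mem_powerset, Finset.mem_filter, Finset.subset_inter_iff]
  calc ∑ B ∈ P, (1 + u : ℝ) ^ (A ∩ B).card
      = ∑ B ∈ P, ∑ S ∈ A.powerset, (if S ⊆ B then u ^ S.card else 0) := by
        exact Finset.sum_congr rfl fun B _ => step1 B
    _ = ∑ S ∈ A.powerset, ∑ B ∈ P, (if S ⊆ B then u ^ S.card else 0) := Finset.sum_comm
    _ = ∑ S ∈ A.powerset, u ^ S.card * ((N - S.card).choose (M - S.card) : ℝ) := by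
        apply Finset.sum_congr rfl
        intro S hS
        have hScard : S.card ≤ M := by
          rw [← hA]; exact Finset.card_le_card (Finset.mem_powerset.mp hS)
        rw [← Finset.sum_filter, Finset.sum_const, card_supersets S M hScard]
        simp [Fintype.card_fin, mul_comm]
    _ ≤ ∑ S ∈ A.powerset, u ^ S.card * ((N.choose M : ℝ) * ((M:ℝ)/N) ^ S.card) := by
        apply Finset.sum_le_sum
        intro S hS
        have hScard : S.card ≤ M := by
          rw [← hA]; exact Finset.card_le_card (Finset.mem_powerset.mp hS)
        exact mul_le_mul_of_nonneg_left (choose_ratio hMN hN S.card hScard) (by positivity)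
    _ = ∑ m ∈ Finset.range (M + 1), (M.choose m) • (u ^ m * ((N.choose M : ℝ) * ((M:ℝ)/N) ^ m)) := by
        rw [Finset.sum_powerset_apply_card (fun m => u ^ m * ((N.choose M : ℝ) * ((M:ℝ)/N) ^ m)), hA]
    _ = (N.choose M : ℝ) * ∑ m ∈ Finset.range (M + 1), (u * ((M:ℝ)/N)) ^ m * 1 ^ (M - m) * (M.choose m) := by
        rw [Finset.mul_sum]
        apply Finset.sum_congr rfl
        intro m _
        simp [nsmul_eq_mul, mul_pow]
        ring
    _ = (N.choose M : ℝ) * (u * ((M:ℝ)/N) + 1) ^ M := by rw [add_pow]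
    _ = (N.choose M : ℝ) * (1 + u * ((M : ℝ) / N)) ^ M := by ring_nf

lemma pair_bound (N M : ℕ) (hM : 1 ≤ M) (hMN : M ≤ N) (ε : ℝ) (hε : 0 < ε) :
    ((((Finset.powersetCard M (univ : Finset (Fin N))) ×ˢ (Finset.powersetCard M (univ : Finset (Fin N)))).filter
        (fun q => ¬(((q.1 ∩ q.2).card : ℝ) < (M:ℝ)^2/N + ε*N))).card : ℝ)
      ≤ Real.exp (-2*ε^2*N) * ((N.choose M : ℝ))^2 := by
  have hN : 1 ≤ N := le_trans hM hMN
  have hN0 : (0:ℝ) < N := by exact_mod_cast hN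
  have hM0 : (0:ℝ) < M := by exact_mod_cast hM
  set P := Finset.powersetCard M (univ : Finset (Fin N)) with hP
  set p : ℝ := (M:ℝ)/N with hp
  have hp0 : 0 ≤ p := by positivity
  have hp1 : p ≤ 1 := by
    rw [hp, div_le_one hN0]; exact_mod_cast hMN
  set l : ℝ := 4*ε*N/M with hl
  have hl0 : 0 < l := by positivity
  set u : ℝ := Real.exp l - 1 with hu
  have hu0 : 0 ≤ u := by
    rw [hu, sub_nonneg]
    exact Real.one_le_exp hl0.le
  set θ : ℝ := (M:ℝ)^2/N + ε*N with hθ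
  have hup : 1 + u * p = 1 - p + p * Real.exp l := by rw [hu]; ring
  have hup0 : 0 < 1 + u * p := by rw [hup]; exact auxGpos p hp0 hp1 l
  have key : ∀ q : Finset (Fin N) × Finset (Fin N),
      Real.exp (l * (((q.1 ∩ q.2).card : ℝ) - θ))
        = Real.exp (-(l*θ)) * (1+u) ^ (q.1 ∩ q.2).card := by
    intro q
    rw [show l * (((q.1 ∩ q.2).card : ℝ) - θ) = -(l*θ) + (q.1 ∩ q.2).card * l by ring,
      Real.exp_add, Real.exp_nat_mul]
    congr 2
    rw [hu]; ring
  calc ((((P ×ˢ P).filter (fun q => ¬(((q.1 ∩ q.2).card : ℝ) < (M:ℝ)^2/N + ε*N))).card : ℝ))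
      = ∑ q ∈ (P ×ˢ P).filter (fun q => ¬(((q.1 ∩ q.2).card : ℝ) < (M:ℝ)^2/N + ε*N)), (1:ℝ) := by
        rw [Finset.sum_const]; simp
    _ ≤ ∑ q ∈ (P ×ˢ P).filter (fun q => ¬(((q.1 ∩ q.2).card : ℝ) < (M:ℝ)^2/N + ε*N)),
          Real.exp (l * (((q.1 ∩ q.2).card : ℝ) - θ)) := by
        apply Finset.sum_le_sum
        intro q hq
        rw [Finset.mem_filter] at hq
        rw [Real.one_le_exp_iff]
        have : θ ≤ ((q.1 ∩ q.2).card : ℝ) := le_of_not_gt hq.2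
        nlinarith
    _ ≤ ∑ q ∈ P ×ˢ P, Real.exp (l * (((q.1 ∩ q.2).card : ℝ) - θ)) := by
        apply Finset.sum_le_sum_of_subset_of_nonneg (Finset.filter_subset _ _)
        intros; positivity
    _ = ∑ q ∈ P ×ˢ P, Real.exp (-(l*θ)) * (1+u) ^ (q.1 ∩ q.2).card :=
        Finset.sum_congr rfl fun q _ => key q
    _ = Real.exp (-(l*θ)) * ∑ A ∈ P, ∑ B ∈ P, (1+u) ^ (A ∩ B).card := by
        rw [← Finset.mul_sum, Finset.sum_product]
    _ ≤ Real.exp (-(l*θ)) * ∑ A ∈ P, (N.choose M : ℝ) * (1 + u * p) ^ M := by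
        apply mul_le_mul_of_nonneg_left _ (Real.exp_pos _).le
        apply Finset.sum_le_sum
        intro A hA
        have hAcard : A.card = M := (Finset.mem_powersetCard.mp hA).2
        exact mgf_bound hMN hN u hu0 A hAcard
    _ = Real.exp (-(l*θ)) * ((N.choose M : ℝ) * ((N.choose M : ℝ) * (1 + u * p) ^ M)) := by
        have hPc : P.card = N.choose M := by
          rw [hP, Finset.card_powersetCard, Finset.card_univ, Fintype.card_fin]
        rw [Finset.sum_const]
        simp only [nsmul_eq_mul, hPc]
    _ ≤ Real.exp (-2*ε^2*N) * ((N.choose M : ℝ))^2 := by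
        have hlog : (1 + u * p) ^ M ≤ Real.exp (M * (p * l + l^2/8)) := by
          calc (1 + u * p) ^ M = Real.exp (M * Real.log (1 + u * p)) := by
                rw [Real.exp_nat_mul, Real.exp_log hup0]
            _ ≤ Real.exp (M * (p * l + l^2/8)) := by
                apply Real.exp_le_exp.mpr
                apply mul_le_mul_of_nonneg_left _ (Nat.cast_nonneg M)
                rw [hup]
                exact auxHoeffding hp0 hp1 hl0.le
        have harith : -(l*θ) + M * (p * l + l^2/8) ≤ -2*ε^2*N := by
          have hθ' : θ = (M:ℝ) * p + ε * N := by rw [hθ, hp]; ring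
          rw [hθ', hl]
          have h1 : (M:ℝ)^2 ≤ (M:ℝ)*N := by nlinarith [(show (M:ℝ) ≤ N by exact_mod_cast hMN)]
          have e1 : -((4*ε*N/M)*((M:ℝ)*p + ε*N)) + M * (p * (4*ε*N/M) + (4*ε*N/M)^2/8)
              = -2*ε^2*N^2/M := by field_simp; ring
          rw [e1]
          rw [div_le_iff₀ hM0]
          have h2 : (M:ℝ) ≤ N := by exact_mod_cast hMN
          nlinarith [mul_le_mul_of_nonneg_left h2 (show (0:ℝ) ≤ 2*ε^2*N by positivity)]
        calc Real.exp (-(l*θ)) * ((N.choose M : ℝ) * ((N.choose M : ℝ) * (1 + u * p) ^ M))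
            ≤ Real.exp (-(l*θ)) * ((N.choose M : ℝ) * ((N.choose M : ℝ) * Real.exp (M * (p * l + l^2/8)))) := by
              apply mul_le_mul_of_nonneg_left _ (Real.exp_pos _).le
              apply mul_le_mul_of_nonneg_left _ (Nat.cast_nonneg _)
              exact mul_le_mul_of_nonneg_left hlog (Nat.cast_nonneg _)
          _ = Real.exp (-(l*θ) + M * (p * l + l^2/8)) * ((N.choose M : ℝ))^2 := by
              rw [Real.exp_add]; ring
          _ ≤ Real.exp (-2*ε^2*N) * ((N.choose M : ℝ))^2 := by
              apply mul_le_mul_of_nonneg_right (Real.exp_le_exp.mpr harith) (by positivity)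

lemma count_pair {ι γ : Type*} [Fintype ι] [DecidableEq ι] [DecidableEq γ] (P : Finset γ)
    (i j : ι) (hij : i ≠ j) (Q : γ → γ → Prop) [∀ a b : γ, Decidable (Q a b)] :
    ((Fintype.piFinset (fun _ : ι => P)).filter (fun b => Q (b i) (b j))).card
      = ((P ×ˢ P).filter (fun q => Q q.1 q.2)).card * P.card ^ (Fintype.card ι - 2) := by
  rw [Finset.card_eq_sum_card_fiberwise
    (f := fun b => (b i, b j)) (t := (P ×ˢ P).filter (fun q => Q q.1 q.2))
    (fun b hb => by
      rw [Finset.mem_coe, Finset.mem_filter] at hb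
      obtain ⟨hb1, hb2⟩ := hb
      rw [Fintype.mem_piFinset] at hb1
      simp only [Finset.mem_coe, Finset.mem_filter, Finset.mem_product]
      exact ⟨⟨hb1 i, hb1 j⟩, hb2⟩)]
  have hfiber : ∀ q ∈ (P ×ˢ P).filter (fun q => Q q.1 q.2),
      (((Fintype.piFinset (fun _ : ι => P)).filter (fun b => Q (b i) (b j))).filter
        (fun b => (b i, b j) = q)).card = P.card ^ (Fintype.card ι - 2) := by
    intro q hq
    rw [Finset.mem_filter, Finset.mem_product] at hq
    obtain ⟨⟨hq1, hq2⟩, hQ⟩ := hq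
    have hset : ((Fintype.piFinset (fun _ : ι => P)).filter (fun b => Q (b i) (b j))).filter
          (fun b => (b i, b j) = q)
        = Fintype.piFinset (fun k => if k = i then {q.1} else if k = j then {q.2} else P) := by
      ext b
      simp only [Finset.mem_filter, Fintype.mem_piFinset, Prod.ext_iff]
      constructor
      · rintro ⟨⟨hb, -⟩, hbi, hbj⟩
        intro k
        by_cases hki : k = i
        · simp [hki, hbi]
        · by_cases hkj : k = j
          · simp [hki, hkj, hbj, Ne.symm hij]
          · simp [hki, hkj, hb k]
      · intro h
        have hbi : b i = q.1 := by have := h i; simpa using this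
        have hbj : b j = q.2 := by
          have := h j; simpa [(Ne.symm hij : j ≠ i)] using this
        refine ⟨⟨fun k => ?_, by rw [hbi, hbj]; exact hQ⟩, hbi, hbj⟩
        have := h k
        by_cases hki : k = i
        · rw [hki, hbi]; exact hq1
        · by_cases hkj : k = j
          · rw [hkj, hbj]; exact hq2
          · simpa [hki, hkj] using this
    rw [hset, Fintype.card_piFinset]
    have hsub : ({i, j} : Finset ι) ⊆ Finset.univ := Finset.subset_univ _
    rw [← Finset.prod_sdiff hsub]
    have h1 : ∏ k ∈ ({i, j} : Finset ι),
        (if k = i then ({q.1} : Finset γ) else if k = j then {q.2} else P).card = 1 := by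
      rw [Finset.prod_pair hij]
      simp [hij, Ne.symm hij]
    have h2 : ∏ k ∈ Finset.univ \ ({i, j} : Finset ι),
        (if k = i then ({q.1} : Finset γ) else if k = j then {q.2} else P).card
        = P.card ^ (Fintype.card ι - 2) := by
      rw [Finset.prod_congr rfl (fun k hk => ?_), Finset.prod_const]
      · congr 1
        rw [Finset.card_sdiff_of_subset hsub, Finset.card_univ, Finset.card_pair hij]
      · rw [Finset.mem_sdiff, Finset.mem_insert, Finset.mem_singleton] at hk
        push_neg at hk
        simp [hk.2.1, hk.2.2]
    rw [h1, h2, mul_one]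
  rw [Finset.sum_congr rfl hfiber, Finset.sum_const, smul_eq_mul]

end AuxStmt5

/-- Tail bound on the maximum pairwise overlap of `K` independent uniformly random
size-`M` subsets `B₁, …, B_K` of an `N`-element set (modeled by the uniform
distribution on the finite sample space `Ω` of `K`-tuples of size-`M` subsets):
for all `ε > 0`,
`P(max_{i<j} |B_i ∩ B_j| < M²/N + εN) ≥ 1 − exp(−2ε²N + 2 log K)`. -/
theorem stmt5 (N M K : ℕ) (hM : 1 ≤ M) (hMN : M ≤ N) (hK : 1 ≤ K)
    (Ω : Finset (Fin K → Finset (Fin N)))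
    (hΩ : Ω = Finset.univ.filter
      (fun b => ∀ k, b k ∈ Finset.powersetCard M (Finset.univ : Finset (Fin N))))
    (ε : ℝ) (hε : 0 < ε) :
    1 - Real.exp (-2 * ε ^ 2 * N + 2 * Real.log K) ≤
      ((Ω.filter (fun b => ∀ i j : Fin K, i < j →
          (((b i ∩ b j).card : ℝ) < (M : ℝ) ^ 2 / N + ε * N))).card : ℝ) / Ω.card := by
  classical
  have hN : 1 ≤ N := le_trans hM hMN
  set P := Finset.powersetCard M (Finset.univ : Finset (Fin N)) with hP
  have hΩ' : Ω = Fintype.piFinset (fun _ : Fin K => P) := by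
    rw [hΩ]; ext b; simp [Fintype.mem_piFinset]
  have hC1 : 0 < N.choose M := Nat.choose_pos hMN
  have hΩcard : Ω.card = N.choose M ^ K := by
    rw [hΩ', Fintype.card_piFinset]
    simp [hP, Finset.card_powersetCard]
  have hCpos : (0:ℝ) < ((N.choose M : ℝ)) ^ K := by positivity
  have hΩpos : (0:ℝ) < (Ω.card : ℝ) := by rw [hΩcard]; push_cast; exact hCpos
  set G := Ω.filter (fun b => ∀ i j : Fin K, i < j →
      (((b i ∩ b j).card : ℝ) < (M : ℝ) ^ 2 / N + ε * N)) with hG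
  set Bad := Ω.filter (fun b => ¬ ∀ i j : Fin K, i < j →
      (((b i ∩ b j).card : ℝ) < (M : ℝ) ^ 2 / N + ε * N)) with hBad
  have hsplit : G.card + Bad.card = Ω.card :=
    Finset.card_filter_add_card_filter_not _
  set pairs := (Finset.univ : Finset (Fin K × Fin K)).filter (fun q => q.1 < q.2) with hpairs
  have hbadsub : Bad ⊆ pairs.biUnion
      (fun q => Ω.filter (fun b => ¬ (((b q.1 ∩ b q.2).card : ℝ) < (M : ℝ) ^ 2 / N + ε * N))) := by
    intro b hb
    rw [hBad, Finset.mem_filter] at hb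
    obtain ⟨hbΩ, hbad⟩ := hb
    push_neg at hbad
    obtain ⟨i, j, hijlt, hval⟩ := hbad
    rw [Finset.mem_biUnion]
    refine ⟨(i,j), by simp [hpairs, hijlt], ?_⟩
    rw [Finset.mem_filter]
    exact ⟨hbΩ, not_lt.mpr hval⟩
  have hpair : ∀ q ∈ pairs,
      ((Ω.filter (fun b => ¬ (((b q.1 ∩ b q.2).card : ℝ) < (M : ℝ) ^ 2 / N + ε * N))).card : ℝ)
        ≤ Real.exp (-2*ε^2*(N:ℝ)) * ((N.choose M : ℝ))^K := by
    intro q hq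
    have hqlt : q.1 < q.2 := by
      rw [hpairs, Finset.mem_filter] at hq; exact hq.2
    have hqne : q.1 ≠ q.2 := ne_of_lt hqlt
    have hK2 : 2 ≤ K := by
      have h1 : (q.1 : ℕ) < (q.2 : ℕ) := hqlt
      have h2 : (q.2 : ℕ) < K := q.2.isLt
      clear_value P G Bad pairs
      omega
    have hcount := count_pair P q.1 q.2 hqne
      (fun A B => ¬ (((A ∩ B).card : ℝ) < (M : ℝ) ^ 2 / N + ε * N))
    rw [hΩ', hcount]
    have hD := pair_bound N M hM hMN ε hε
    rw [Fintype.card_fin]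
    have hPcard : P.card = N.choose M := by
      rw [hP, Finset.card_powersetCard, Finset.card_univ, Fintype.card_fin]
    rw [hPcard, Nat.cast_mul, Nat.cast_pow]
    refine le_trans (mul_le_mul_of_nonneg_right hD (by positivity :
        (0:ℝ) ≤ ((N.choose M : ℝ)) ^ (K - 2))) ?_
    rw [mul_assoc, ← _root_.pow_add ((N.choose M : ℝ)) 2 (K-2)]
    rw [Nat.add_sub_cancel' hK2]
  have hbadcard : (Bad.card : ℝ) ≤ (K:ℝ)^2 * (Real.exp (-2*ε^2*(N:ℝ)) * ((N.choose M : ℝ))^K) := by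
    calc (Bad.card : ℝ)
        ≤ ((pairs.biUnion (fun q => Ω.filter
            (fun b => ¬ (((b q.1 ∩ b q.2).card : ℝ) < (M : ℝ) ^ 2 / N + ε * N)))).card : ℝ) := by
          exact_mod_cast Nat.cast_le.mpr (Finset.card_le_card hbadsub)
      _ ≤ ∑ q ∈ pairs, ((Ω.filter
            (fun b => ¬ (((b q.1 ∩ b q.2).card : ℝ) < (M : ℝ) ^ 2 / N + ε * N))).card : ℝ) := by
          push_cast
          exact_mod_cast Nat.cast_le.mpr (Finset.card_biUnion_le)
      _ ≤ ∑ q ∈ pairs, Real.exp (-2*ε^2*(N:ℝ)) * ((N.choose M : ℝ))^K :=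
          Finset.sum_le_sum hpair
      _ = (pairs.card : ℝ) * (Real.exp (-2*ε^2*(N:ℝ)) * ((N.choose M : ℝ))^K) := by
          rw [Finset.sum_const, nsmul_eq_mul]
      _ ≤ (K:ℝ)^2 * (Real.exp (-2*ε^2*(N:ℝ)) * ((N.choose M : ℝ))^K) := by
          apply mul_le_mul_of_nonneg_right _ (by positivity)
          have : pairs.card ≤ K^2 := by
            calc pairs.card ≤ (Finset.univ : Finset (Fin K × Fin K)).card :=
                  Finset.card_filter_le _ _
              _ = K^2 := by simp [Fintype.card_prod, sq]
          exact_mod_cast this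
  have hK0 : (0:ℝ) < (K:ℝ) := by exact_mod_cast hK
  have hexp2 : Real.exp (-2 * ε ^ 2 * N + 2 * Real.log K)
      = Real.exp (-2*ε^2*(N:ℝ)) * (K:ℝ)^2 := by
    rw [Real.exp_add, two_mul, Real.exp_add, Real.exp_log hK0]
    ring
  rw [hexp2, le_div_iff₀ hΩpos]
  have hGcard : (G.card : ℝ) = (Ω.card : ℝ) - (Bad.card : ℝ) := by
    have := hsplit
    push_cast [← this]
    ring
  rw [hGcard]
  have hΩR : (Ω.card : ℝ) = ((N.choose M : ℝ))^K := by
    rw [hΩcard]; push_cast; ring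
  rw [hΩR]
  nlinarith [hbadcard, hCpos, Real.exp_pos (-2*ε^2*(N:ℝ))]
end

section
/- Let Σ ∈ ℝ^{p×p} be symmetric positive definite and S ⊆ [p]. If every diagonal entry of Θ = Σ^{-1} is at most a constant c > 0 and |S| ≤ m, then λ_min(Σ_{S,S}) ≥ 1/(m·c). -/
open Matrix

open scoped MatrixOrder in
/-- For a real positive semidefinite matrix, the quadratic form is bounded by the trace
times the squared norm. -/
lemma quad_le_trace_aux {n : Type*} [Fintype n] [DecidableEq n] {B : Matrix n n ℝ}
    (hB : B.PosSemidef) (v : n → ℝ) :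
    v ⬝ᵥ (B *ᵥ v) ≤ B.trace * (v ⬝ᵥ v) := by
  set C := CFC.sqrt B with hC
  have hCsym : ∀ i j, C i j = C j i := fun i j => by
    simpa using (CFC.sqrt_nonneg B).posSemidef.1.apply j i
  have hBC : C * C = B := CFC.sqrt_mul_sqrt_self B hB.nonneg
  have hCt : Cᵀ = C := by ext i j; exact hCsym j i
  have h1 : v ⬝ᵥ (B *ᵥ v) = (C *ᵥ v) ⬝ᵥ (C *ᵥ v) := by
    rw [← hBC, ← mulVec_mulVec, dotProduct_mulVec, ← mulVec_transpose, hCt]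
  have h2 : ∀ i, (C *ᵥ v) i * (C *ᵥ v) i ≤ (∑ j, C i j ^ 2) * (∑ j, v j ^ 2) := by
    intro i
    have := Finset.sum_mul_sq_le_sq_mul_sq Finset.univ (fun j => C i j) v
    simpa [mulVec, dotProduct, ← sq] using this
  have htr : B.trace = ∑ i, ∑ j, C i j ^ 2 := by
    rw [← hBC]
    simp only [Matrix.trace, Matrix.diag, mul_apply]
    exact Finset.sum_congr rfl fun i _ => Finset.sum_congr rfl fun j _ => by
      rw [hCsym j i, sq]
  calc v ⬝ᵥ (B *ᵥ v) = ∑ i, (C *ᵥ v) i * (C *ᵥ v) i := by rw [h1]; rfl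
    _ ≤ ∑ i, (∑ j, C i j ^ 2) * (∑ j, v j ^ 2) := Finset.sum_le_sum fun i _ => h2 i
    _ = (∑ i, ∑ j, C i j ^ 2) * (∑ j, v j ^ 2) := by rw [Finset.sum_mul]
    _ = B.trace * (v ⬝ᵥ v) := by rw [htr]; congr 1; simp [dotProduct, sq]

/-- If `Σ` is symmetric positive definite, every diagonal entry of `Θ = Σ⁻¹` is at most
`c > 0`, and `|S| ≤ m`, then `λ_min(Σ_{S,S}) ≥ 1/(m·c)`, i.e. every eigenvalue of the
principal submatrix `Σ_{S,S}` is at least `1/(m·c)`. -/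
theorem stmt8 {p : ℕ} (Sg : Matrix (Fin p) (Fin p) ℝ)
    (hpd : Sg.PosDef) (hsym : Sg.IsSymm) (c : ℝ) (hc : 0 < c)
    (hdiag : ∀ i, Sg⁻¹ i i ≤ c) (m : ℕ) (S : Finset (Fin p)) (hS : S.card ≤ m)
    (A : Matrix ↥S ↥S ℝ) (hAdef : A = Matrix.of fun a b : ↥S => Sg a.1 b.1)
    (hA : A.IsHermitian) :
    ∀ k, 1 / ((m : ℝ) * c) ≤ hA.eigenvalues k := by
  intro k
  classical
  set Θ := Sg⁻¹ with hΘ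
  -- extension by zero
  set E : (↥S → ℝ) → (Fin p → ℝ) := fun v j => if h : j ∈ S then v ⟨j, h⟩ else 0 with hE
  have hEapp : ∀ (v : ↥S → ℝ) (a : ↥S), E v ↑a = v a := by
    intro v a
    simp [hE, a.2]
  have hEdot : ∀ (v : ↥S → ℝ) (w : Fin p → ℝ), E v ⬝ᵥ w = ∑ a : ↥S, v a * w ↑a := by
    intro v w
    rw [dotProduct]
    have h0 : ∑ j : Fin p, E v j * w j = ∑ j ∈ S, E v j * w j := by
      refine (Finset.sum_subset (Finset.subset_univ S) ?_).symm
      intro j _ hj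
      simp [hE, dif_neg hj]
    rw [h0, ← Finset.sum_coe_sort S (fun j => E v j * w j)]
    exact Finset.sum_congr rfl fun a _ => by rw [hEapp]
  have hmulE : ∀ (v : ↥S → ℝ) (a : ↥S), (Sg *ᵥ E v) ↑a = (A *ᵥ v) a := by
    intro v a
    have h1 : (Sg *ᵥ E v) ↑a = E v ⬝ᵥ (fun k => Sg ↑a k) := by
      simp [mulVec, dotProduct, mul_comm]
    rw [h1, hEdot]
    simp [hAdef, mulVec, dotProduct, mul_comm]
  have hquad : ∀ v : ↥S → ℝ, E v ⬝ᵥ (Sg *ᵥ E v) = v ⬝ᵥ (A *ᵥ v) := by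
    intro v
    rw [hEdot, dotProduct]
    exact Finset.sum_congr rfl fun a _ => by rw [hmulE]
  -- A is positive definite
  have hApd : A.PosDef := by
    refine Matrix.PosDef.of_dotProduct_mulVec_pos hA fun x hx => ?_
    have hzne : E x ≠ 0 := by
      intro h
      apply hx
      funext a
      have := congrFun h ↑a
      rw [hEapp] at this
      simpa using this
    have h := hpd.dotProduct_mulVec_pos hzne
    simpa [hquad x] using h
  have hdetA : IsUnit A.det := isUnit_iff_ne_zero.mpr (ne_of_gt hApd.det_pos)
  have h1 : A * A⁻¹ = 1 := mul_nonsing_inv A hdetA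
  have h2 : A⁻¹ * A = 1 := nonsing_inv_mul A hdetA
  have hSg1 : Sg * Sg⁻¹ = 1 :=
    mul_nonsing_inv Sg (isUnit_iff_ne_zero.mpr (ne_of_gt hpd.det_pos))
  set B := A⁻¹ with hB
  have hBpd : B.PosDef := hApd.inv
  -- diagonal of B is bounded by diagonal of Θ
  have hdiagB : ∀ i : ↥S, B i i ≤ Θ ↑i ↑i := by
    intro i
    set e : Fin p → ℝ := Pi.single (↑i : Fin p) 1 with he
    set y : ↥S → ℝ := fun a => B a i with hy
    have hyv : y = B *ᵥ Pi.single i 1 := by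
      funext a; simp [hy, mulVec_single]
    have hF1 : E y ⬝ᵥ e = B i i := by
      rw [he, dotProduct_single, mul_one, hEapp]
    have hF2 : E y ⬝ᵥ (Sg *ᵥ E y) = B i i := by
      rw [hquad, hyv, mulVec_mulVec, h1, one_mulVec, dotProduct_single, mul_one]
      simp [mulVec_single]
    set u : Fin p → ℝ := Θ *ᵥ e with hu
    have hSgu : Sg *ᵥ u = e := by rw [hu, hΘ, mulVec_mulVec, hSg1, one_mulVec]
    have hcross : u ⬝ᵥ (Sg *ᵥ E y) = E y ⬝ᵥ e := by
      rw [dotProduct_mulVec, ← mulVec_transpose, hsym, hSgu, dotProduct_comm]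
    have hue : u ⬝ᵥ e = Θ ↑i ↑i := by
      rw [he, dotProduct_single, mul_one, hu, he]
      simp [mulVec_single]
    have hexp : (E y - u) ⬝ᵥ (Sg *ᵥ (E y - u)) = Θ ↑i ↑i - B i i := by
      rw [mulVec_sub, hSgu, dotProduct_sub, sub_dotProduct, sub_dotProduct,
        hF2, hcross, hF1, hue]
      ring
    have hposq : 0 ≤ (E y - u) ⬝ᵥ (Sg *ᵥ (E y - u)) := by
      have := hpd.posSemidef.dotProduct_mulVec_nonneg (E y - u)
      simpa using this
    rw [hexp] at hposq
    linarith
  -- trace bound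
  have htrace : B.trace ≤ (m : ℝ) * c := by
    have hcard : (S.card : ℝ) ≤ (m : ℝ) := by exact_mod_cast hS
    calc B.trace = ∑ i : ↥S, B i i := rfl
      _ ≤ ∑ _i : ↥S, c := Finset.sum_le_sum fun i _ => (hdiagB i).trans (hdiag ↑i)
      _ = (S.card : ℝ) * c := by
          simp [Finset.sum_const, nsmul_eq_mul]
      _ ≤ (m : ℝ) * c := mul_le_mul_of_nonneg_right hcard hc.le
  -- eigenvalue argument
  set v : ↥S → ℝ := ⇑(hA.eigenvectorBasis k) with hv
  set μ := hA.eigenvalues k with hμ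
  have hμpos : 0 < μ := hApd.eigenvalues_pos k
  have hAv : A *ᵥ v = μ • v := hA.mulVec_eigenvectorBasis k
  have hBv : v = μ • (B *ᵥ v) := by
    have h3 := congrArg (fun w => B *ᵥ w) hAv
    simpa [mulVec_mulVec, h2, one_mulVec, mulVec_smul] using h3
  have hvv : v ⬝ᵥ v = 1 := by
    have hnorm : ‖hA.eigenvectorBasis k‖ = 1 := (hA.eigenvectorBasis).orthonormal.1 k
    have hinner : (inner ℝ (hA.eigenvectorBasis k) (hA.eigenvectorBasis k) : ℝ) = 1 := by
      rw [real_inner_self_eq_norm_mul_norm, hnorm, one_mul]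
    rw [← hinner, PiLp.inner_apply]
    simp [dotProduct, RCLike.inner_apply, hv, sq]
  have hq : μ * (v ⬝ᵥ (B *ᵥ v)) = 1 := by
    have h3 : μ * (v ⬝ᵥ (B *ᵥ v)) = v ⬝ᵥ v := by
      rw [← smul_eq_mul, ← dotProduct_smul, ← hBv]
    rw [h3, hvv]
  have hqle : v ⬝ᵥ (B *ᵥ v) ≤ (m : ℝ) * c := by
    have h4 := quad_le_trace_aux hBpd.posSemidef v
    rw [hvv, mul_one] at h4
    exact h4.trans htrace
  have hm1 : (1 : ℝ) ≤ (m : ℝ) := by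
    have hcard : 1 ≤ S.card := Finset.card_pos.mpr ⟨↑k, k.2⟩
    exact_mod_cast hcard.trans hS
  have hmc : 0 < (m : ℝ) * c := mul_pos (by linarith) hc
  rw [div_le_iff₀ hmc]
  have h5 : μ * (v ⬝ᵥ (B *ᵥ v)) ≤ μ * ((m : ℝ) * c) :=
    mul_le_mul_of_nonneg_left hqle hμpos.le
  linarith
end
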